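/- Let K be a field with char K = 2 and let t, t' ∈ K*. Then the algebras S(0, t, t, t, t, 0) and S(0, t', t', t', t', 0) are isomorphic if and only if 1/t + 1/t' = x² + x for some x ∈ K. -/

import Mathlib

/-- Multiplication of the 2-dimensional algebra `S(p,q,a,b,c,d)` on `K × K`,
with basis `e = (1,0)`, `f = (0,1)` and table
`e*e = f`, `f*f = p•e + q•f`, `e*f = a•e + b•f`, `f*e = c•e + d•f`. -/
def mulS {K : Type*} [Field K] (p q a b c d : K) (u v : K × K) : K × K :=
  (u.1 * v.2 * a + u.2 * v.1 * c + u.2 * v.2 * p,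
   u.1 * v.1 + u.1 * v.2 * b + u.2 * v.1 * d + u.2 * v.2 * q)

/-- `S(p,q,a,b,c,d)` is endo-commutative: `(x*x)*(y*y) = (x*y)*(x*y)`. -/
def EndoComm {K : Type*} [Field K] (p q a b c d : K) : Prop :=
  ∀ u v : K × K,
    mulS p q a b c d (mulS p q a b c d u u) (mulS p q a b c d v v) =
      mulS p q a b c d (mulS p q a b c d u v) (mulS p q a b c d u v)

/-- `S(p,q,a,b,c,d)` and `S(p',q',a',b',c',d')` are isomorphic: there is a bijective
`K`-linear map between them preserving multiplication. -/
def IsoS {K : Type*} [Field K] (p q a b c d p' q' a' b' c' d' : K) : Prop :=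
  ∃ φ : (K × K) ≃ₗ[K] (K × K),
    ∀ u v : K × K,
      φ (mulS p q a b c d u v) = mulS p' q' a' b' c' d' (φ u) (φ v)

theorem iso_II1_3_char_two_iff {K : Type*} [Field K] [CharP K 2]
    (t t' : K) (ht : t ≠ 0) (ht' : t' ≠ 0) :
    IsoS 0 t t t t 0 0 t' t' t' t' 0 ↔
      ∃ x : K, 1 / t + 1 / t' = x ^ 2 + x := by
  have h2 : (2 : K) = 0 := by exact_mod_cast CharP.cast_eq_zero K 2
  constructor
  · rintro ⟨φ, hφ⟩
    have hee := hφ (1, 0) (1, 0)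
    have hef := hφ (1, 0) (0, 1)
    have hff := hφ (0, 1) (0, 1)
    simp only [mulS] at hee hef hff
    norm_num at hee hef hff
    have h1 : φ (t, t) = t • φ (1, 0) + t • φ (0, 1) := by
      rw [show ((t, t) : K × K) = t • (1, 0) + t • ((0, 1) : K × K) by
        simp [Prod.ext_iff], map_add, map_smul, map_smul]
    have h0 : φ (0, t) = t • φ (0, 1) := by
      rw [show ((0, t) : K × K) = t • ((0, 1) : K × K) by simp [Prod.ext_iff],
        map_smul]
    rw [h1] at hef
    rw [h0] at hff
    simp only [Prod.ext_iff, Prod.fst_add, Prod.snd_add, Prod.smul_fst,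
      Prod.smul_snd, smul_eq_mul] at hee hef hff
    set a1 := (φ (1, 0)).1 with ha1d
    set a2 := (φ (1, 0)).2 with ha2d
    set b1 := (φ (0, 1)).1 with hb1d
    set b2 := (φ (0, 1)).2 with hb2d
    have hb1 : b1 = 0 := by linear_combination hee.1 + a1 * a2 * t' * h2
    have hb2ne : b2 ≠ 0 := by
      intro hz
      have hb0 : φ (0, 1) = 0 := by
        have : φ (0, 1) = (b1, b2) := by rw [hb1d, hb2d]
        rw [this, hb1, hz]; rfl
      have h01 : ((0, 1) : K × K) = 0 := φ.map_eq_zero_iff.mp hb0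
      simp [Prod.ext_iff] at h01
    have hA : t' * b2 = t := by
      apply mul_right_cancel₀ hb2ne
      linear_combination -hff.2 - (b1 + b2 * t') * hb1
    have h5 : t * b2 = t' * a1 * b2 := by
      linear_combination hef.2 + a2 * hA + a1 * hb1
    have ha1 : a1 = b2 := by
      apply mul_left_cancel₀ ht
      linear_combination -h5 - a1 * hA
    have key : b2 = b2 * b2 + b2 * a2 * t' + a2 * a2 * t' := by
      linear_combination hee.2 + (a1 + b2 + a2 * t') * ha1
    have hfinal : t' * t = t ^ 2 + t * t' * (t' * a2) + t' * (t' * a2) ^ 2 := by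
      linear_combination t' ^ 2 * key + (t' * b2 + t + t' ^ 2 * a2 - t') * hA
    refine ⟨t' * a2 / t, ?_⟩
    field_simp
    linear_combination hfinal + t ^ 2 * h2
  · rintro ⟨x, hx⟩
    have main : ∀ δ γ : K, δ ≠ 0 → t' * δ = t →
        δ = δ ^ 2 + t' * δ * γ + t' * γ ^ 2 → IsoS 0 t t t t 0 0 t' t' t' t' 0 := by
      intro δ γ hδ hd hk
      let F : (K × K) →ₗ[K] (K × K) :=
        { toFun := fun w => (δ * w.1, γ * w.1 + δ * w.2)
          map_add' := by intro u v; simp [Prod.ext_iff]; constructor <;> ring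
          map_smul' := by intro c u; simp [Prod.ext_iff]; constructor <;> ring }
      let G : (K × K) →ₗ[K] (K × K) :=
        { toFun := fun w => (w.1 / δ, -(γ * w.1) / δ ^ 2 + w.2 / δ)
          map_add' := by intro u v; simp [Prod.ext_iff]; constructor <;> ring
          map_smul' := by intro c u; simp [Prod.ext_iff]; constructor <;> ring }
      refine ⟨LinearEquiv.ofLinear F G ?_ ?_, ?_⟩
      · apply LinearMap.ext; intro w
        simp only [LinearMap.coe_comp, Function.comp_apply, LinearMap.coe_mk,
          AddHom.coe_mk, LinearMap.id_apply, F, G]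
        rw [Prod.ext_iff]
        constructor <;> (field_simp; try ring)
      · apply LinearMap.ext; intro w
        simp only [LinearMap.coe_comp, Function.comp_apply, LinearMap.coe_mk,
          AddHom.coe_mk, LinearMap.id_apply, F, G]
        rw [Prod.ext_iff]
        constructor <;> (field_simp; try ring)
      · intro u v
        simp only [LinearEquiv.ofLinear_apply, LinearMap.coe_mk, AddHom.coe_mk,
          mulS, F]
        rw [Prod.ext_iff]
        constructor
        · linear_combination -(δ * u.1 * v.2 + δ * u.2 * v.1) * hd -
            t' * δ * γ * u.1 * v.1 * h2
        · linear_combination u.1 * v.1 * hk -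
            (γ * u.1 * v.2 + γ * u.2 * v.1 + δ * u.1 * v.2 + δ * u.2 * v.2) * hd
    have hkey : t' + t = t * t' * x ^ 2 + t * t' * x := by
      field_simp at hx; linear_combination hx
    exact main (t / t') (t * x / t') (div_ne_zero ht ht') (by field_simp)
      (by field_simp; linear_combination hkey - t * h2)
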